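/- Let B be a finite alphabet equipped with an involutive map a ↦ ā, let S ⊆ B be closed under the involution with ā ≠ a for every a ∈ S, and let w = w₁w₂⋯w_m be a word over B containing no factor aa with a ∈ S and no factor a ā a with a ∈ S. Let k be the number of positions of w that lie inside some occurrence of a factor of length 3 all of whose three letters belong to S (i.e., positions belonging to a maximal block of consecutive S-letters of length at least 3). Then there exists an involuting partition S = S₊ ⊔ S₋ (meaning S̄₊ = S₋, S₊ ∩ S₋ = ∅, S₊ ∪ S₋ = S) such that 16 · |{i : 1 ≤ i < m, w_i ∈ S₊ and w_{i+1} ∈ S₋}| ≥ k. -/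

import Mathlib

open scoped Classical

section Aux

variable {B : Type*} [Fintype B] [DecidableEq B]

noncomputable def rnk (b : B) : ℕ := ((Fintype.equivFin B) b : ℕ)

lemma rnk_inj : Function.Injective (rnk (B := B)) := by
  intro a b h
  exact (Fintype.equivFin B).injective (Fin.val_injective h)

noncomputable def rep (bar : B → B) (a : B) : B :=
  if rnk a < rnk (bar a) then a else bar a

noncomputable def sgn (bar : B → B) (a : B) : Bool :=
  decide (rnk a < rnk (bar a))

lemma rep_bar (bar : B → B) (hbar : Function.Involutive bar) {a : B} (ha : bar a ≠ a) :
    rep bar (bar a) = rep bar a ∧ sgn bar (bar a) = !(sgn bar a) := by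
  have hbb : bar (bar a) = a := hbar a
  have hne : rnk a ≠ rnk (bar a) := fun h => ha (rnk_inj h).symm
  unfold rep sgn
  rcases hne.lt_or_gt with h | h
  · rw [hbb]; simp [h, asymm h]
  · rw [hbb]; simp [h, asymm h]

lemma rep_cases (bar : B → B) (a : B) : rep bar a = a ∨ rep bar a = bar a := by
  unfold rep; split <;> simp

noncomputable def SpOf (bar : B → B) (S : Finset B) (g : B → Bool) : Finset B :=
  S.filter (fun a => g (rep bar a) = sgn bar a)

noncomputable def SmOf (bar : B → B) (S : Finset B) (g : B → Bool) : Finset B :=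
  S.filter (fun a => g (rep bar a) = !(sgn bar a))

lemma partition_props (bar : B → B) (hbar : Function.Involutive bar)
    (S : Finset B) (hSbar : ∀ a ∈ S, bar a ∈ S) (hSne : ∀ a ∈ S, bar a ≠ a) (g : B → Bool) :
    (SpOf bar S g).image bar = SmOf bar S g ∧ Disjoint (SpOf bar S g) (SmOf bar S g) ∧
      SpOf bar S g ∪ SmOf bar S g = S := by
  refine ⟨?_, ?_, ?_⟩
  · ext b
    simp only [Finset.mem_image, SpOf, SmOf, Finset.mem_filter]
    constructor
    · rintro ⟨a, ⟨haS, hg⟩, rfl⟩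
      obtain ⟨hrep, hsgn⟩ := rep_bar bar hbar (hSne a haS)
      refine ⟨hSbar a haS, ?_⟩
      rw [hrep, hg, hsgn]
      simp
    · rintro ⟨hbS, hg⟩
      refine ⟨bar b, ⟨hSbar b hbS, ?_⟩, hbar b⟩
      obtain ⟨hrep, hsgn⟩ := rep_bar bar hbar (hSne b hbS)
      rw [hrep, hg, hsgn]
  · rw [Finset.disjoint_left]
    intro a ha ha'
    rw [SpOf, Finset.mem_filter] at ha
    rw [SmOf, Finset.mem_filter] at ha'
    rw [ha.2] at ha'
    simp at ha'
  · ext a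
    simp only [Finset.mem_union, SpOf, SmOf, Finset.mem_filter]
    constructor
    · rintro (⟨h, _⟩ | ⟨h, _⟩) <;> exact h
    · intro h
      rcases Bool.eq_or_eq_not (g (rep bar a)) (sgn bar a) with hh | hh
      · exact Or.inl ⟨h, hh⟩
      · exact Or.inr ⟨h, hh⟩

lemma fiber_bound {x y : B} (hxy : x ≠ y) (u v : Bool) :
    2 ^ (Fintype.card B - 2) ≤
      (Finset.univ.filter (fun g : B → Bool => g x = u ∧ g y = v)).card := by
  classical
  set ι : ({z : B // z ≠ x ∧ z ≠ y} → Bool) → (B → Bool) :=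
    fun h z => if hz : z ≠ x ∧ z ≠ y then h ⟨z, hz⟩ else if z = x then u else v with hι
  have hmaps : ∀ h : {z : B // z ≠ x ∧ z ≠ y} → Bool,
      ι h ∈ Finset.univ.filter (fun g : B → Bool => g x = u ∧ g y = v) := by
    intro h
    simp only [Finset.mem_filter, Finset.mem_univ, true_and, hι]
    constructor
    · rw [dif_neg (by simp)]
      simp
    · rw [dif_neg (by simp)]
      rw [if_neg hxy.symm]
  have hinj : Function.Injective ι := by
    intro h h' he
    funext z
    have h1 := congrFun he z.1
    simp only [hι, dif_pos z.2] at h1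
    exact h1
  have hcard2 : Fintype.card {z : B // z ≠ x ∧ z ≠ y} = Fintype.card B - 2 := by
    rw [Fintype.card_subtype]
    have heq : Finset.univ.filter (fun z : B => z ≠ x ∧ z ≠ y) = Finset.univ \ {x, y} := by
      ext z
      simp [not_or]
    rw [heq, Finset.card_sdiff_of_subset (Finset.subset_univ _), Finset.card_pair hxy, Finset.card_univ]
  calc 2 ^ (Fintype.card B - 2)
      = (Finset.univ : Finset ({z : B // z ≠ x ∧ z ≠ y} → Bool)).card := by
        rw [Finset.card_univ, Fintype.card_fun, Fintype.card_bool, hcard2]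
    _ ≤ _ := Finset.card_le_card_of_injOn ι (fun h _ => hmaps h) hinj.injOn

noncomputable def phi (bar : B → B) (S : Finset B) (m : ℕ) (w : ℕ → B) (i : ℕ) : ℕ :=
  if h : ∃ j, j + 2 < m ∧ j ≤ i ∧ i ≤ j + 2 ∧ w j ∈ S ∧ w (j + 1) ∈ S ∧ w (j + 2) ∈ S then
    (if w (Classical.choose h + 1) = bar (w (Classical.choose h)) then Classical.choose h + 1
     else Classical.choose h)
  else 0

end Aux

/-- Let `S ⊆ B` be closed under an involution `bar` with `bar a ≠ a` on `S`,
and let `w = w₀ ⋯ w_{m-1}` contain no factor `a a` and no factor `a ā a` with `a ∈ S`.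
Let `k` be the number of positions of `w` lying inside an occurrence of a factor of
length `3` all of whose letters are in `S`.  Then there is an involuting partition
`S = S₊ ⊔ S₋` such that `16·#{i | wᵢ ∈ S₊, w_{i+1} ∈ S₋} ≥ k`. -/
theorem stmt_3 {B : Type*} [Fintype B] [DecidableEq B]
    (bar : B → B) (hbar : Function.Involutive bar)
    (S : Finset B) (hSbar : ∀ a ∈ S, bar a ∈ S) (hSne : ∀ a ∈ S, bar a ≠ a)
    (m : ℕ) (w : ℕ → B)
    (hnoaa : ∀ i, i + 1 < m → ¬(w i ∈ S ∧ w (i + 1) = w i))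
    (hnoabara : ∀ i, i + 2 < m → ¬(w i ∈ S ∧ w (i + 1) = bar (w i) ∧ w (i + 2) = w i))
    (k : ℕ)
    (hk : k = ((Finset.range m).filter (fun i =>
      ∃ j, j + 2 < m ∧ j ≤ i ∧ i ≤ j + 2 ∧
        w j ∈ S ∧ w (j + 1) ∈ S ∧ w (j + 2) ∈ S)).card) :
    ∃ Sp Sm : Finset B, Sp.image bar = Sm ∧ Disjoint Sp Sm ∧ Sp ∪ Sm = S ∧
      k ≤ 16 * ((Finset.range m).filter (fun i =>
        i + 1 < m ∧ w i ∈ Sp ∧ w (i + 1) ∈ Sm)).card := by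
  classical
  set counted : Finset ℕ := (Finset.range m).filter (fun i =>
      ∃ j, j + 2 < m ∧ j ≤ i ∧ i ≤ j + 2 ∧
        w j ∈ S ∧ w (j + 1) ∈ S ∧ w (j + 2) ∈ S) with hcounted
  set good : Finset ℕ := (Finset.range m).filter (fun p =>
      p + 1 < m ∧ w p ∈ S ∧ w (p + 1) ∈ S ∧ w (p + 1) ≠ bar (w p)) with hgood
  -- Step A : every counted position is within distance 2 of a good pair
  have hφ : ∀ i ∈ counted, phi bar S m w i ∈ good ∧
      phi bar S m w i ≤ i + 1 ∧ i ≤ phi bar S m w i + 2 := by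
    intro i hi
    rw [hcounted, Finset.mem_filter] at hi
    obtain ⟨him, hPi⟩ := hi
    obtain ⟨hj2, hji, hij, h0, h1, h2⟩ := Classical.choose_spec hPi
    by_cases hc : w (Classical.choose hPi + 1) = bar (w (Classical.choose hPi))
    · have hphi : phi bar S m w i = Classical.choose hPi + 1 := by
        unfold phi
        rw [dif_pos hPi, if_pos hc]
      set j := Classical.choose hPi with hj
      rw [hphi]
      refine ⟨?_, by omega, by omega⟩
      rw [hgood, Finset.mem_filter]
      refine ⟨Finset.mem_range.mpr (by omega), by omega, h1, h2, ?_⟩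
      intro hcon
      apply hnoabara j hj2
      refine ⟨h0, hc, ?_⟩
      rw [hcon, hc, hbar]
    · have hphi : phi bar S m w i = Classical.choose hPi := by
        unfold phi
        rw [dif_pos hPi, if_neg hc]
      set j := Classical.choose hPi with hj
      rw [hphi]
      refine ⟨?_, by omega, by omega⟩
      rw [hgood, Finset.mem_filter]
      exact ⟨Finset.mem_range.mpr (by omega), by omega, h0, h1, hc⟩
  have hA : counted.card ≤ 4 * good.card := by
    have h1 : counted.card ≤ 4 * (counted.image (phi bar S m w)).card := by
      apply Finset.card_le_mul_card_image
      intro p hp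
      have hsub : counted.filter (fun i => phi bar S m w i = p) ⊆
          Finset.Icc (p - 1) (p + 2) := by
        intro i hi
        rw [Finset.mem_filter] at hi
        obtain ⟨hic, hfp⟩ := hi
        obtain ⟨_, hb1, hb2⟩ := hφ i hic
        rw [hfp] at hb1 hb2
        rw [Finset.mem_Icc]
        omega
      calc (counted.filter (fun i => phi bar S m w i = p)).card
          ≤ (Finset.Icc (p - 1) (p + 2)).card := Finset.card_le_card hsub
        _ ≤ 4 := by rw [Nat.card_Icc]; omega
    have h2 : counted.image (phi bar S m w) ⊆ good := by
      intro p hp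
      rw [Finset.mem_image] at hp
      obtain ⟨i, hi, rfl⟩ := hp
      exact (hφ i hi).1
    calc counted.card ≤ 4 * (counted.image (phi bar S m w)).card := h1
      _ ≤ 4 * good.card := Nat.mul_le_mul_left 4 (Finset.card_le_card h2)
  -- Step B : averaging over all sign assignments
  set N : (B → Bool) → ℕ := fun g => ((Finset.range m).filter (fun i =>
        i + 1 < m ∧ w i ∈ SpOf bar S g ∧ w (i + 1) ∈ SmOf bar S g)).card with hN
  obtain ⟨g0, -, hg0⟩ := Finset.exists_max_image (Finset.univ : Finset (B → Bool)) N
    Finset.univ_nonempty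
  have hrepne : ∀ p ∈ good, rep bar (w p) ≠ rep bar (w (p + 1)) := by
    intro p hp
    rw [hgood, Finset.mem_filter] at hp
    obtain ⟨-, hm1, haS, hbS, hnb⟩ := hp
    have hna : w (p + 1) ≠ w p := fun h => hnoaa p hm1 ⟨haS, h⟩
    have hx : w p ≠ bar (w (p + 1)) := fun h => hnb (by rw [h, hbar])
    have hy : bar (w p) ≠ bar (w (p + 1)) := fun h => hna (hbar.injective h).symm
    rcases rep_cases bar (w p) with e1 | e1 <;> rcases rep_cases bar (w (p + 1)) with e2 | e2 <;>
      rw [e1, e2]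
    · exact fun h => hna h.symm
    · exact hx
    · exact fun h => hnb h.symm
    · exact hy
  have hcount : ∀ p ∈ good, 2 ^ (Fintype.card B - 2) ≤
      (Finset.univ.filter (fun g : B → Bool =>
        p + 1 < m ∧ w p ∈ SpOf bar S g ∧ w (p + 1) ∈ SmOf bar S g)).card := by
    intro p hp
    have hne := hrepne p hp
    rw [hgood, Finset.mem_filter] at hp
    obtain ⟨-, hm1, haS, hbS, hnb⟩ := hp
    refine le_trans (fiber_bound hne (sgn bar (w p)) (!(sgn bar (w (p + 1)))))
      (Finset.card_le_card ?_)
    intro g hg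
    rw [Finset.mem_filter] at hg ⊢
    obtain ⟨-, hh1, hh2⟩ := hg
    exact ⟨Finset.mem_univ g, hm1, Finset.mem_filter.mpr ⟨haS, hh1⟩,
      Finset.mem_filter.mpr ⟨hbS, hh2⟩⟩
  have hsum : good.card * 2 ^ (Fintype.card B - 2) ≤ ∑ g : B → Bool, N g := by
    calc good.card * 2 ^ (Fintype.card B - 2)
        = ∑ _p ∈ good, 2 ^ (Fintype.card B - 2) := by rw [Finset.sum_const, smul_eq_mul]
      _ ≤ ∑ p ∈ good, (Finset.univ.filter (fun g : B → Bool =>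
            p + 1 < m ∧ w p ∈ SpOf bar S g ∧ w (p + 1) ∈ SmOf bar S g)).card :=
          Finset.sum_le_sum hcount
      _ = ∑ p ∈ good, ∑ g : B → Bool, (if p + 1 < m ∧ w p ∈ SpOf bar S g ∧
            w (p + 1) ∈ SmOf bar S g then 1 else 0) := by
          refine Finset.sum_congr rfl fun p _ => ?_
          rw [Finset.card_filter]
      _ = ∑ g : B → Bool, ∑ p ∈ good, (if p + 1 < m ∧ w p ∈ SpOf bar S g ∧
            w (p + 1) ∈ SmOf bar S g then 1 else 0) := Finset.sum_comm
      _ ≤ ∑ g : B → Bool, ∑ p ∈ Finset.range m, (if p + 1 < m ∧ w p ∈ SpOf bar S g ∧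
            w (p + 1) ∈ SmOf bar S g then 1 else 0) := by
          refine Finset.sum_le_sum fun g _ => Finset.sum_le_sum_of_subset ?_
          rw [hgood]
          exact Finset.filter_subset _ _
      _ = ∑ g : B → Bool, N g := by
          refine Finset.sum_congr rfl fun g _ => ?_
          simp only [hN, Finset.card_filter]
  have htot : ∑ g : B → Bool, N g ≤ 2 ^ Fintype.card B * N g0 := by
    calc ∑ g : B → Bool, N g ≤ (Finset.univ : Finset (B → Bool)).card • N g0 :=
          Finset.sum_le_card_nsmul _ _ _ (fun g _ => hg0 g (Finset.mem_univ g))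
      _ = 2 ^ Fintype.card B * N g0 := by
          rw [smul_eq_mul, Finset.card_univ, Fintype.card_fun, Fintype.card_bool]
  have hG4 : good.card ≤ 4 * N g0 := by
    rcases Finset.eq_empty_or_nonempty good with he | hne
    · simp [he]
    · obtain ⟨p, hp⟩ := hne
      have h2le : 2 ≤ Fintype.card B := Fintype.one_lt_card_iff.mpr ⟨_, _, hrepne p hp⟩
      have hpow : 2 ^ Fintype.card B = 4 * 2 ^ (Fintype.card B - 2) := by
        obtain ⟨c, hc⟩ : ∃ c, Fintype.card B = c + 2 := ⟨Fintype.card B - 2, by omega⟩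
        rw [hc, Nat.add_sub_cancel, pow_add]
        ring
      have hchain := le_trans hsum htot
      rw [hpow] at hchain
      have h' : good.card * 2 ^ (Fintype.card B - 2) ≤
          (4 * N g0) * 2 ^ (Fintype.card B - 2) := by
        calc good.card * 2 ^ (Fintype.card B - 2)
            ≤ 4 * 2 ^ (Fintype.card B - 2) * N g0 := hchain
          _ = (4 * N g0) * 2 ^ (Fintype.card B - 2) := by ring
      exact Nat.le_of_mul_le_mul_right h' (Nat.pow_pos (by norm_num))
  obtain ⟨himg, hdisj, huni⟩ := partition_props bar hbar S hSbar hSne g0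
  refine ⟨SpOf bar S g0, SmOf bar S g0, himg, hdisj, huni, ?_⟩
  have hfin : k ≤ 16 * N g0 := by
    calc k = counted.card := hk
      _ ≤ 4 * good.card := hA
      _ ≤ 4 * (4 * N g0) := Nat.mul_le_mul_left 4 hG4
      _ = 16 * N g0 := by ring
  simpa only [hN] using hfin
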